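/- arXiv:2407.05790 — 3 statements merged into one kernel-verified Lean document; each statement's English description precedes it below -/
import Mathlib

section
/- Suppose U : ℝ^{d_θ} × ℝ^{d_x} → ℝ is measurable, the function (θ,x) ↦ U(θ,x) − (μ/2)(‖θ‖² + ‖x‖²) is convex on ℝ^{d_θ+d_x} for some μ > 0, and 0 < ∫_{ℝ^{d_x}} e^{−U(θ,x)} dx < ∞ for every θ ∈ ℝ^{d_θ}. Then the negative marginal log-likelihood κ(θ) := −log ∫_{ℝ^{d_x}} e^{−U(θ,x)} dx is μ-strongly convex, i.e. θ ↦ κ(θ) − (μ/2)‖θ‖² is convex on ℝ^{d_θ}. Equivalently, the marginal likelihood θ ↦ p_θ(y) := ∫_{ℝ^{d_x}} e^{−U(θ,x)} dx is μ-strongly log-concave. -/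
open MeasureTheory Real

open MeasureTheory Pointwise

section PrekopaLeindler

/-- Weighted AM-GM for two ENNReal numbers. -/
lemma ennreal_geom_mean_le (a b : ENNReal) {s t : ℝ} (hs : 0 < s) (ht : 0 < t)
    (hst : s + t = 1) :
    a ^ s * b ^ t ≤ ENNReal.ofReal s * a + ENNReal.ofReal t * b := by
  rcases eq_or_ne a ⊤ with rfl | ha
  · have : ENNReal.ofReal s * ⊤ = ⊤ := ENNReal.mul_top (by simp [hs])
    simp [this]
  rcases eq_or_ne b ⊤ with rfl | hb
  · have : ENNReal.ofReal t * ⊤ = ⊤ := ENNReal.mul_top (by simp [ht])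
    simp [this]
  lift a to NNReal using ha
  lift b to NNReal using hb
  rw [← ENNReal.coe_rpow_of_nonneg a hs.le, ← ENNReal.coe_rpow_of_nonneg b ht.le,
    ← ENNReal.coe_mul]
  have h := NNReal.geom_mean_le_arith_mean2_weighted (w₁ := s.toNNReal) (w₂ := t.toNNReal)
    (p₁ := a) (p₂ := b) (by rw [← Real.toNNReal_add hs.le ht.le, hst, Real.toNNReal_one])
  calc ((a ^ s * b ^ t : NNReal) : ENNReal)
      = ((a ^ (s.toNNReal : ℝ) * b ^ (t.toNNReal : ℝ) : NNReal) : ENNReal) := by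
        rw [Real.coe_toNNReal s hs.le, Real.coe_toNNReal t ht.le]
    _ ≤ ((s.toNNReal * a + t.toNNReal * b : NNReal) : ENNReal) := by
        exact_mod_cast h
    _ = ENNReal.ofReal s * a + ENNReal.ofReal t * b := by
        push_cast [ENNReal.ofReal]
        ring

/-- One-dimensional Brunn–Minkowski: volume is superadditive under Minkowski sums. -/
lemma volume_add_le_volume_sumset {A B : Set ℝ} (hA : MeasurableSet A) (hB : MeasurableSet B)
    (hA0 : A.Nonempty) (hB0 : B.Nonempty) :
    volume A + volume B ≤ volume (A + B) := by
  have key : ∀ K L : Set ℝ, IsCompact K → IsCompact L → K ⊆ A → L ⊆ B →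
      volume K + volume L ≤ volume (A + B) := by
    intro K L hK hL hKA hLB
    rcases K.eq_empty_or_nonempty with rfl | hKne
    · obtain ⟨a, ha⟩ := hA0
      have him : (a + ·) '' L ⊆ A + B := by
        rintro _ ⟨l, hl, rfl⟩; exact Set.add_mem_add ha (hLB hl)
      have : volume ((a + ·) '' L) = volume L := by
        rw [Set.image_add_left]; exact measure_preimage_add volume (-a) L
      simpa [this] using (measure_mono him).trans_eq' this
    rcases L.eq_empty_or_nonempty with rfl | hLne
    · obtain ⟨b, hb⟩ := hB0
      have him : (· + b) '' K ⊆ A + B := by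
        rintro _ ⟨k, hk, rfl⟩; exact Set.add_mem_add (hKA hk) hb
      have : volume ((· + b) '' K) = volume K := by
        rw [Set.image_add_right]; exact measure_preimage_add_right volume (-b) K
      simpa [this ▸ measure_mono him]
    · set a := sSup K with ha_def
      set b := sInf L with hb_def
      have haK : a ∈ K := hK.sSup_mem hKne
      have hbL : b ∈ L := hL.sInf_mem hLne
      set S : Set ℝ := ((· + b) '' K) \ {a + b} with hS_def
      set T : Set ℝ := (a + ·) '' L with hT_def
      have hST : S ∪ T ⊆ A + B := by
        rintro z (⟨⟨k, hk, rfl⟩, -⟩ | ⟨l, hl, rfl⟩)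
        · exact Set.add_mem_add (hKA hk) (hLB hbL)
        · exact Set.add_mem_add (hKA haK) (hLB hl)
      have hdisj : Disjoint S T := by
        rw [Set.disjoint_left]
        rintro z ⟨⟨k, hk, rfl⟩, hz⟩ ⟨l, hl, hzl⟩
        have h1 : k ≤ a := le_csSup hK.bddAbove hk
        have h2 : b ≤ l := csInf_le hL.bddBelow hl
        have h3 : a + l = k + b := hzl
        have : k + b = a + b := by linarith
        exact hz (by simp [this])
      have hTm : MeasurableSet T := ((hL.image (continuous_add_left a))).measurableSet
      have hvol : volume S + volume T ≤ volume (A + B) := by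
        rw [← measure_union hdisj hTm]
        exact measure_mono hST
      have hvS : volume S = volume K := by
        rw [hS_def, measure_diff_null (measure_singleton _), Set.image_add_right]
        exact measure_preimage_add_right volume (-b) K
      have hvT : volume T = volume L := by
        rw [hT_def, Set.image_add_left]; exact measure_preimage_add volume (-a) L
      rwa [hvS, hvT] at hvol
  rcases eq_or_ne (volume A) 0 with hA0' | hAne
  · obtain ⟨a, ha⟩ := hA0
    have him : (a + ·) '' B ⊆ A + B := by
      rintro _ ⟨l, hl, rfl⟩; exact Set.add_mem_add ha hl
    have heq : volume ((a + ·) '' B) = volume B := by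
      rw [Set.image_add_left]; exact measure_preimage_add volume (-a) B
    rw [hA0', zero_add, ← heq]
    exact measure_mono him
  rcases eq_or_ne (volume B) 0 with hB0' | hBne
  · obtain ⟨b, hb⟩ := hB0
    have him : (· + b) '' A ⊆ A + B := by
      rintro _ ⟨k, hk, rfl⟩; exact Set.add_mem_add hk hb
    have heq : volume ((· + b) '' A) = volume A := by
      rw [Set.image_add_right]; exact measure_preimage_add_right volume (-b) A
    rw [hB0', add_zero, ← heq]
    exact measure_mono him
  refine le_of_forall_lt fun c hc => ?_
  obtain ⟨x, hx, y, hy, hc'⟩ := ENNReal.exists_lt_add_of_lt_add hc hAne hBne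
  obtain ⟨K, hKA, hKc, hKx⟩ := hA.exists_lt_isCompact hx
  obtain ⟨L, hLB, hLc, hLy⟩ := hB.exists_lt_isCompact hy
  calc c < x + y := hc'
    _ ≤ volume K + volume L := add_le_add hKx.le hLy.le
    _ ≤ volume (A + B) := key K L hKc hLc hKA hLB

/-- Layer cake representation for bounded ENNReal functions. -/
lemma layercake_aux {φ : ℝ → ENNReal} (hφ : Measurable φ) (hφ1 : ∀ x, φ x ≤ 1) :
    ∫⁻ x, φ x = ∫⁻ r in Set.Ioo (0:ℝ) 1, volume {a | ENNReal.ofReal r < φ a} := by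
  have hne : ∀ x, φ x ≠ ⊤ := fun x => ((hφ1 x).trans_lt ENNReal.one_lt_top).ne
  have hmeas : Measurable fun r : ℝ => volume {a | r < (φ a).toReal} := by
    apply Antitone.measurable
    intro r s hrs
    exact measure_mono fun a ha => lt_of_le_of_lt hrs ha
  calc ∫⁻ x, φ x = ∫⁻ x, ENNReal.ofReal ((φ x).toReal) := by
        simp_rw [ENNReal.ofReal_toReal (hne _)]
    _ = ∫⁻ r in Set.Ioi 0, volume {a | r < (φ a).toReal} :=
        lintegral_eq_lintegral_meas_lt volume (ae_of_all _ fun x => ENNReal.toReal_nonneg)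
          hφ.ennreal_toReal.aemeasurable
    _ = ∫⁻ r in Set.Ioo 0 1, volume {a | r < (φ a).toReal} := by
        rw [← Set.Ioo_union_Ici_eq_Ioi (zero_lt_one), lintegral_union measurableSet_Ici
          (by rw [Set.disjoint_left]; rintro a ⟨-, h1⟩ h2; exact absurd h2 (not_le.mpr h1))]
        have : ∀ r ∈ Set.Ici (1:ℝ), volume {a | r < (φ a).toReal} = 0 := by
          intro r hr
          convert measure_empty (μ := volume)
          ext a
          simp only [Set.mem_setOf_eq, Set.mem_empty_iff_false, iff_false, not_lt]
          exact le_trans (ENNReal.toReal_le_of_le_ofReal zero_le_one (by simpa using hφ1 a)) hr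
        rw [setLIntegral_congr_fun measurableSet_Ici this, lintegral_zero, add_zero]
    _ = ∫⁻ r in Set.Ioo 0 1, volume {a | ENNReal.ofReal r < φ a} := by
        refine setLIntegral_congr_fun measurableSet_Ioo (fun r hr => ?_)
        congr 1
        ext a
        simp only [Set.mem_setOf_eq]
        rw [ENNReal.ofReal_lt_iff_lt_toReal hr.1.le (hne a)]

/-- Core normalized 1-D Prékopa–Leindler step. -/
lemma one_dim_core {f g h : ℝ → ENNReal} (hf : Measurable f) (hg : Measurable g)
    (hh : Measurable h) {t : ℝ} (ht0 : 0 < t) (ht1 : t < 1)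
    (hf1 : ∀ x, f x ≤ 1) (hg1 : ∀ x, g x ≤ 1)
    (hfs : (⨆ x, f x) = 1) (hgs : (⨆ x, g x) = 1)
    (hyp : ∀ x y : ℝ, f x ^ (1 - t) * g y ^ t ≤ h ((1 - t) * x + t * y)) :
    ENNReal.ofReal (1 - t) * (∫⁻ x, f x) + ENNReal.ofReal t * (∫⁻ x, g x) ≤ ∫⁻ x, h x := by
  set h' : ℝ → ENNReal := fun z => min (h z) 1 with hh'_def
  have hh' : Measurable h' := hh.min measurable_const
  have hh'1 : ∀ x, h' x ≤ 1 := fun x => min_le_right _ _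
  have hmono : ∫⁻ x, h' x ≤ ∫⁻ x, h x := lintegral_mono fun x => min_le_left _ _
  refine le_trans ?_ hmono
  rw [layercake_aux hf hf1, layercake_aux hg hg1, layercake_aux hh' hh'1]
  have hmeasf : Measurable fun r : ℝ => volume {a | ENNReal.ofReal r < f a} := by
    apply Antitone.measurable
    intro r s hrs
    exact measure_mono fun a ha => lt_of_le_of_lt (ENNReal.ofReal_le_ofReal hrs) ha
  have hmeasg : Measurable fun r : ℝ => volume {a | ENNReal.ofReal r < g a} := by
    apply Antitone.measurable
    intro r s hrs
    exact measure_mono fun a ha => lt_of_le_of_lt (ENNReal.ofReal_le_ofReal hrs) ha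
  rw [← lintegral_const_mul _ hmeasf, ← lintegral_const_mul _ hmeasg,
    ← lintegral_add_left ((hmeasf.const_mul _)) ]
  have hmeash : Measurable fun r : ℝ => volume {a | ENNReal.ofReal r < h' a} := by
    apply Antitone.measurable
    intro r s hrs
    exact measure_mono fun a ha => lt_of_le_of_lt (ENNReal.ofReal_le_ofReal hrs) ha
  refine setLIntegral_mono hmeash fun r hr => ?_
  obtain ⟨hr0, hr1⟩ := hr
  -- level sets
  set Af := {a | ENNReal.ofReal r < f a} with hAf
  set Ag := {a | ENNReal.ofReal r < g a} with hAg
  have hAfm : MeasurableSet Af := hf measurableSet_Ioi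
  have hAgm : MeasurableSet Ag := hg measurableSet_Ioi
  have hrlt1 : ENNReal.ofReal r < 1 := by
    rw [← ENNReal.ofReal_one]; exact ENNReal.ofReal_lt_ofReal_iff_of_nonneg hr0.le |>.mpr hr1
  have hAfne : Af.Nonempty := by
    have : ENNReal.ofReal r < ⨆ x, f x := hfs ▸ hrlt1
    obtain ⟨x, hx⟩ := lt_iSup_iff.mp this
    exact ⟨x, hx⟩
  have hAgne : Ag.Nonempty := by
    have : ENNReal.ofReal r < ⨆ x, g x := hgs ▸ hrlt1
    obtain ⟨x, hx⟩ := lt_iSup_iff.mp this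
    exact ⟨x, hx⟩
  have hincl : (1 - t) • Af + t • Ag ⊆ {a | ENNReal.ofReal r < h' a} := by
    rintro _ ⟨_, ⟨x, hx, rfl⟩, _, ⟨y, hy, rfl⟩, rfl⟩
    simp only [smul_eq_mul, Set.mem_setOf_eq, hh'_def, lt_min_iff]
    constructor
    · calc ENNReal.ofReal r = ENNReal.ofReal r ^ (1 - t) * ENNReal.ofReal r ^ t := by
            rw [← ENNReal.rpow_add _ _ (by simpa using hr0) ENNReal.ofReal_ne_top]
            norm_num
        _ < f x ^ (1 - t) * g y ^ t :=
            ENNReal.mul_lt_mul (ENNReal.rpow_lt_rpow hx (by linarith))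
              (ENNReal.rpow_lt_rpow hy ht0)
        _ ≤ h ((1 - t) * x + t * y) := hyp x y
    · exact hrlt1
  calc ENNReal.ofReal (1 - t) * volume Af + ENNReal.ofReal t * volume Ag
      = volume ((1 - t) • Af) + volume (t • Ag) := by
        rw [Measure.addHaar_smul, Measure.addHaar_smul]
        simp [abs_of_pos ht0, abs_of_pos (by linarith : (0:ℝ) < 1 - t), ENNReal.ofReal]
    _ ≤ volume ((1 - t) • Af + t • Ag) := by
        refine volume_add_le_volume_sumset (hAfm.const_smul₀ _) (hAgm.const_smul₀ _) ?_ ?_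
        · exact hAfne.smul_set
        · exact hAgne.smul_set
    _ ≤ volume {a | ENNReal.ofReal r < h' a} := measure_mono hincl

/-- Bounded-function version of 1D Prékopa–Leindler. -/
lemma one_dim_PL_bdd {f g h : ℝ → ENNReal} (hf : Measurable f) (hg : Measurable g)
    (hh : Measurable h) {t : ℝ} (ht0 : 0 < t) (ht1 : t < 1)
    {Cf Cg : ENNReal} (hCf : Cf ≠ ⊤) (hCg : Cg ≠ ⊤)
    (hf1 : ∀ x, f x ≤ Cf) (hg1 : ∀ x, g x ≤ Cg)
    (hyp : ∀ x y : ℝ, f x ^ (1 - t) * g y ^ t ≤ h ((1 - t) * x + t * y)) :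
    (∫⁻ x, f x) ^ (1 - t) * (∫⁻ x, g x) ^ t ≤ ∫⁻ x, h x := by
  have h1t : (0:ℝ) < 1 - t := by linarith
  set A := ⨆ x, f x with hA
  set B := ⨆ x, g x with hB
  rcases eq_or_ne A 0 with hA0 | hAne
  · have : ∀ x, f x = 0 := fun x => le_antisymm (hA0 ▸ le_iSup f x) zero_le
    rw [lintegral_congr this, lintegral_zero, ENNReal.zero_rpow_of_pos h1t, zero_mul]
    exact zero_le
  rcases eq_or_ne B 0 with hB0 | hBne
  · have : ∀ x, g x = 0 := fun x => le_antisymm (hB0 ▸ le_iSup g x) zero_le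
    rw [lintegral_congr this, lintegral_zero, ENNReal.zero_rpow_of_pos ht0, mul_zero]
    exact zero_le
  have hAt : A ≠ ⊤ := ne_top_of_le_ne_top hCf (iSup_le hf1)
  have hBt : B ≠ ⊤ := ne_top_of_le_ne_top hCg (iSup_le hg1)
  set c : ENNReal := A ^ (1 - t) * B ^ t with hc
  have hcne : c ≠ 0 := by
    simp only [hc, mul_ne_zero_iff]
    exact ⟨(ENNReal.rpow_pos (by simpa using hAne.bot_lt) hAt).ne',
      (ENNReal.rpow_pos (by simpa using hBne.bot_lt) hBt).ne'⟩
  have hct : c ≠ ⊤ := by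
    simp only [hc]
    exact ENNReal.mul_ne_top (ENNReal.rpow_ne_top_of_nonneg h1t.le hAt)
      (ENNReal.rpow_ne_top_of_nonneg ht0.le hBt)
  -- normalized functions
  have key := one_dim_core (f := fun x => A⁻¹ * f x) (g := fun x => B⁻¹ * g x)
    (h := fun z => c⁻¹ * h z) (hf.const_mul _) (hg.const_mul _) (hh.const_mul _) ht0 ht1
    (fun x => by
      rw [← ENNReal.inv_mul_cancel hAne hAt]
      exact mul_le_mul_right (le_iSup f x) _)
    (fun x => by
      rw [← ENNReal.inv_mul_cancel hBne hBt]
      exact mul_le_mul_right (le_iSup g x) _)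
    (by rw [← ENNReal.mul_iSup, ← hA, ENNReal.inv_mul_cancel hAne hAt])
    (by rw [← ENNReal.mul_iSup, ← hB, ENNReal.inv_mul_cancel hBne hBt])
    (fun x y => by
      rw [ENNReal.mul_rpow_of_nonneg _ _ h1t.le, ENNReal.mul_rpow_of_nonneg _ _ ht0.le]
      calc A⁻¹ ^ (1-t) * f x ^ (1-t) * (B⁻¹ ^ t * g y ^ t)
          = (A⁻¹ ^ (1-t) * B⁻¹ ^ t) * (f x ^ (1-t) * g y ^ t) := by ring
        _ ≤ (A⁻¹ ^ (1-t) * B⁻¹ ^ t) * h ((1-t)*x + t*y) := mul_le_mul_right (hyp x y) _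
        _ = c⁻¹ * h ((1-t)*x + t*y) := by
            rw [hc, ENNReal.mul_inv (Or.inl (ENNReal.rpow_pos (by simpa using hAne.bot_lt) hAt).ne')
              (Or.inl (ENNReal.rpow_ne_top_of_nonneg h1t.le hAt)),
              ← ENNReal.inv_rpow, ← ENNReal.inv_rpow])
  -- key : ofReal (1-t) * ∫ (A⁻¹ f) + ofReal t * ∫ (B⁻¹ g) ≤ ∫ (c⁻¹ h)
  rw [lintegral_const_mul _ hf, lintegral_const_mul _ hg, lintegral_const_mul _ hh] at key
  have amgm := ennreal_geom_mean_le (A⁻¹ * ∫⁻ x, f x) (B⁻¹ * ∫⁻ x, g x) h1t ht0 (by ring)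
  have chain : (A⁻¹ * ∫⁻ x, f x) ^ (1-t) * (B⁻¹ * ∫⁻ x, g x) ^ t ≤ c⁻¹ * ∫⁻ x, h x :=
    le_trans amgm key
  rw [ENNReal.mul_rpow_of_nonneg _ _ h1t.le, ENNReal.mul_rpow_of_nonneg _ _ ht0.le] at chain
  have chain2 : c⁻¹ * ((∫⁻ x, f x) ^ (1-t) * (∫⁻ x, g x) ^ t) ≤ c⁻¹ * ∫⁻ x, h x := by
    calc c⁻¹ * ((∫⁻ x, f x) ^ (1-t) * (∫⁻ x, g x) ^ t)
        = A⁻¹ ^ (1-t) * (∫⁻ x, f x) ^ (1-t) * (B⁻¹ ^ t * (∫⁻ x, g x) ^ t) := by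
          rw [hc, ENNReal.mul_inv (Or.inl (ENNReal.rpow_pos (by simpa using hAne.bot_lt) hAt).ne')
            (Or.inl (ENNReal.rpow_ne_top_of_nonneg h1t.le hAt)),
            ← ENNReal.inv_rpow, ← ENNReal.inv_rpow]
          ring
      _ ≤ c⁻¹ * ∫⁻ x, h x := chain
  rwa [ENNReal.mul_le_mul_iff_right (by simpa using hct) (by simpa using hcne)] at chain2

/-- Full 1D Prékopa–Leindler inequality (lintegral form). -/
lemma one_dim_PL {f g h : ℝ → ENNReal} (hf : Measurable f) (hg : Measurable g)
    (hh : Measurable h) {t : ℝ} (ht0 : 0 < t) (ht1 : t < 1)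
    (hyp : ∀ x y : ℝ, f x ^ (1 - t) * g y ^ t ≤ h ((1 - t) * x + t * y)) :
    (∫⁻ x, f x) ^ (1 - t) * (∫⁻ x, g x) ^ t ≤ ∫⁻ x, h x := by
  have h1t : (0:ℝ) < 1 - t := by linarith
  set fn : ℕ → ℝ → ENNReal := fun n x => min (f x) n with hfn
  set gn : ℕ → ℝ → ENNReal := fun n x => min (g x) n with hgn
  have hkey : ∀ n : ℕ, (∫⁻ x, fn n x) ^ (1 - t) * (∫⁻ x, gn n x) ^ t ≤ ∫⁻ x, h x := by
    intro n
    refine one_dim_PL_bdd (hf.min measurable_const) (hg.min measurable_const) hh ht0 ht1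
      (ENNReal.natCast_ne_top n) (ENNReal.natCast_ne_top n)
      (fun x => min_le_right _ _) (fun x => min_le_right _ _) (fun x y => ?_)
    exact le_trans (mul_le_mul' (ENNReal.rpow_le_rpow (min_le_left _ _) h1t.le)
      (ENNReal.rpow_le_rpow (min_le_left _ _) ht0.le)) (hyp x y)
  -- pass to the limit
  have hfsup : ∀ x, (⨆ n : ℕ, fn n x) = f x := by
    intro x
    refine le_antisymm (iSup_le fun n => min_le_left _ _) ?_
    rcases eq_or_ne (f x) ⊤ with hx | hx
    · rw [hx]
      have : ∀ n : ℕ, (n : ENNReal) ≤ ⨆ m : ℕ, fn m x := by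
        intro n
        refine le_trans ?_ (le_iSup _ n)
        simp [hfn, hx]
      simpa using le_trans (le_of_eq (ENNReal.iSup_natCast).symm) (iSup_le this)
    · obtain ⟨n, hn⟩ := ENNReal.exists_nat_gt (lt_top_iff_ne_top.mpr hx).ne
      refine le_trans ?_ (le_iSup _ n)
      simp [hfn, min_eq_left hn.le]
  have hgsup : ∀ x, (⨆ n : ℕ, gn n x) = g x := by
    intro x
    refine le_antisymm (iSup_le fun n => min_le_left _ _) ?_
    rcases eq_or_ne (g x) ⊤ with hx | hx
    · rw [hx]
      have : ∀ n : ℕ, (n : ENNReal) ≤ ⨆ m : ℕ, gn m x := by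
        intro n
        refine le_trans ?_ (le_iSup _ n)
        simp [hgn, hx]
      simpa using le_trans (le_of_eq (ENNReal.iSup_natCast).symm) (iSup_le this)
    · obtain ⟨n, hn⟩ := ENNReal.exists_nat_gt (lt_top_iff_ne_top.mpr hx).ne
      refine le_trans ?_ (le_iSup _ n)
      simp [hgn, min_eq_left hn.le]
  have hmonof : Monotone fun n : ℕ => fn n := by
    intro m n hmn x
    exact min_le_min le_rfl (by exact_mod_cast Nat.cast_le.mpr hmn)
  have hmonog : Monotone fun n : ℕ => gn n := by
    intro m n hmn x
    exact min_le_min le_rfl (by exact_mod_cast Nat.cast_le.mpr hmn)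
  have hif : (∫⁻ x, f x) = ⨆ n : ℕ, ∫⁻ x, fn n x := by
    rw [← lintegral_iSup (fun n => hf.min measurable_const) hmonof]
    exact lintegral_congr fun x => (hfsup x).symm
  have hig : (∫⁻ x, g x) = ⨆ n : ℕ, ∫⁻ x, gn n x := by
    rw [← lintegral_iSup (fun n => hg.min measurable_const) hmonog]
    exact lintegral_congr fun x => (hgsup x).symm
  rw [hif, hig]
  have hrw1 : (⨆ n : ℕ, ∫⁻ x, fn n x) ^ (1 - t) = ⨆ n : ℕ, (∫⁻ x, fn n x) ^ (1 - t) :=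
    (ENNReal.orderIsoRpow (1 - t) h1t).map_iSup _
  have hrw2 : (⨆ n : ℕ, ∫⁻ x, gn n x) ^ t = ⨆ n : ℕ, (∫⁻ x, gn n x) ^ t :=
    (ENNReal.orderIsoRpow t ht0).map_iSup _
  rw [hrw1, hrw2, ENNReal.iSup_mul]
  refine iSup_le fun n => ?_
  rw [ENNReal.mul_iSup]
  refine iSup_le fun m => ?_
  refine le_trans ?_ (hkey (max n m))
  refine mul_le_mul' (ENNReal.rpow_le_rpow ?_ h1t.le) (ENNReal.rpow_le_rpow ?_ ht0.le)
  · exact lintegral_mono fun x => hmonof (le_max_left n m) x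
  · exact lintegral_mono fun x => hmonog (le_max_right n m) x

/-- Prékopa–Leindler inequality on `Fin n → ℝ` (lintegral form). -/
lemma pi_PL : ∀ (n : ℕ) {f g h : (Fin n → ℝ) → ENNReal}, Measurable f → Measurable g →
    Measurable h → ∀ {t : ℝ}, 0 < t → t < 1 →
    (∀ x y : Fin n → ℝ, f x ^ (1 - t) * g y ^ t ≤ h ((1 - t) • x + t • y)) →
    (∫⁻ x, f x) ^ (1 - t) * (∫⁻ x, g x) ^ t ≤ ∫⁻ x, h x := by
  intro n
  induction n with
  | zero =>
    intro f g h hf hg hh t ht0 ht1 hyp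
    have huniv : volume (Set.univ : Set (Fin 0 → ℝ)) = 1 := by
      simp [volume_pi]
    set x0 : Fin 0 → ℝ := fun i => i.elim0 with hx0
    have hf' : f = fun _ => f x0 := funext fun x => congrArg f (Subsingleton.elim _ _)
    have hg' : g = fun _ => g x0 := funext fun x => congrArg g (Subsingleton.elim _ _)
    have hh' : h = fun _ => h x0 := funext fun x => congrArg h (Subsingleton.elim _ _)
    rw [hf', hg', hh', lintegral_const, lintegral_const, lintegral_const, huniv,
      mul_one, mul_one, mul_one]
    have h2 := hyp x0 x0
    rwa [(Subsingleton.elim ((1 - t) • x0 + t • x0) x0)] at h2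
  | succ n ih =>
    intro f g h hf hg hh t ht0 ht1 hyp
    set e := MeasurableEquiv.piFinSuccAbove (fun _ : Fin (n+1) => ℝ) 0 with he
    have hmp : MeasurePreserving (⇑e) volume volume :=
      volume_preserving_piFinSuccAbove (fun _ : Fin (n + 1) => ℝ) 0
    -- linearity of e.symm
    have helin : ∀ (a b : ℝ) (p q : Fin (n+1) → ℝ), e (a • p + b • q) = a • e p + b • e q := by
      intro a b p q
      refine Prod.ext ?_ ?_
      · simp [he, MeasurableEquiv.piFinSuccAbove_apply]
      · funext j
        rfl
    have hsymm_lin : ∀ (a b : ℝ) (u v : ℝ × (Fin n → ℝ)),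
        e.symm (a • u + b • v) = a • e.symm u + b • e.symm v := by
      intro a b u v
      apply e.injective
      rw [MeasurableEquiv.apply_symm_apply, helin, MeasurableEquiv.apply_symm_apply,
        MeasurableEquiv.apply_symm_apply]
    set f₂ : ℝ × (Fin n → ℝ) → ENNReal := f ∘ e.symm with hf₂
    set g₂ : ℝ × (Fin n → ℝ) → ENNReal := g ∘ e.symm with hg₂
    set h₂ : ℝ × (Fin n → ℝ) → ENNReal := h ∘ e.symm with hh₂
    have hf₂m : Measurable f₂ := hf.comp e.symm.measurable
    have hg₂m : Measurable g₂ := hg.comp e.symm.measurable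
    have hh₂m : Measurable h₂ := hh.comp e.symm.measurable
    set F : ℝ → ENNReal := fun a => ∫⁻ y, f₂ (a, y) with hF
    set G : ℝ → ENNReal := fun a => ∫⁻ y, g₂ (a, y) with hG
    set H : ℝ → ENNReal := fun a => ∫⁻ y, h₂ (a, y) with hH
    have hFm : Measurable F := Measurable.lintegral_prod_right (f := fun a y => f₂ (a, y)) hf₂m
    have hGm : Measurable G := Measurable.lintegral_prod_right (f := fun a y => g₂ (a, y)) hg₂m
    have hHm : Measurable H := Measurable.lintegral_prod_right (f := fun a y => h₂ (a, y)) hh₂m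
    have hFGH : ∀ a b : ℝ, F a ^ (1 - t) * G b ^ t ≤ H ((1 - t) * a + t * b) := by
      intro a b
      refine ih (hf₂m.comp (measurable_prodMk_left)) (hg₂m.comp (measurable_prodMk_left))
        (hh₂m.comp (measurable_prodMk_left)) ht0 ht1 ?_
      intro y z
      have := hyp (e.symm (a, y)) (e.symm (b, z))
      rwa [← hsymm_lin, (by refine Prod.ext ?_ ?_ <;> simp : ((1-t) • ((a : ℝ), y) + t • (b, z))
        = ((1-t) * a + t * b, (1-t) • y + t • z))] at this
    have h1D := one_dim_PL hFm hGm hHm ht0 ht1 hFGH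
    have hconv : ∀ (φ : (Fin (n+1) → ℝ) → ENNReal), Measurable φ →
        (∫⁻ a, ∫⁻ y, (φ ∘ e.symm) (a, y)) = ∫⁻ x, φ x := by
      intro φ hφ
      rw [← lintegral_prod _ ((hφ.comp e.symm.measurable).aemeasurable)]
      rw [← MeasureTheory.Measure.volume_eq_prod]
      exact (MeasurePreserving.symm e hmp).lintegral_comp hφ
    rw [hF, hG, hH] at h1D
    rwa [hconv f hf, hconv g hg, hconv h hh] at h1D

/-- Prékopa–Leindler on Euclidean space. -/
lemma euclidean_PL {m : ℕ} {f g h : EuclideanSpace ℝ (Fin m) → ENNReal}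
    (hf : Measurable f) (hg : Measurable g) (hh : Measurable h)
    {t : ℝ} (ht0 : 0 < t) (ht1 : t < 1)
    (hyp : ∀ x y : EuclideanSpace ℝ (Fin m), f x ^ (1 - t) * g y ^ t ≤ h ((1 - t) • x + t • y)) :
    (∫⁻ x, f x) ^ (1 - t) * (∫⁻ x, g x) ^ t ≤ ∫⁻ x, h x := by
  set e := (MeasurableEquiv.toLp 2 (Fin m → ℝ)).symm with he
  have hmp : MeasurePreserving (⇑e) volume volume :=
    EuclideanSpace.volume_preserving_symm_measurableEquiv_toLp (Fin m)
  have hconv : ∀ (φ : EuclideanSpace ℝ (Fin m) → ENNReal), Measurable φ →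
      (∫⁻ x, (φ ∘ e.symm) x) = ∫⁻ x, φ x := fun φ hφ =>
    (MeasurePreserving.symm e hmp).lintegral_comp hφ
  rw [← hconv f hf, ← hconv g hg, ← hconv h hh]
  refine pi_PL m (hf.comp e.symm.measurable) (hg.comp e.symm.measurable)
    (hh.comp e.symm.measurable) ht0 ht1 fun x y => ?_
  have hlin : e.symm ((1 - t) • x + t • y) = (1 - t) • e.symm x + t • e.symm y := rfl
  simpa [Function.comp, hlin] using hyp (e.symm x) (e.symm y)

end PrekopaLeindler

/-- **Strong log-concavity of the marginal likelihood.**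
If `U : ℝ^{dθ} × ℝ^{dx} → ℝ` is measurable, `(θ, x) ↦ U θ x - (μ/2)(‖θ‖² + ‖x‖²)` is convex
for some `μ > 0`, and `0 < ∫ exp (-U θ x) dx < ∞` for every `θ`, then the negative marginal
log-likelihood `κ θ = -log ∫ exp (-U θ x) dx` is `μ`-strongly convex, i.e.
`θ ↦ κ θ - (μ/2)‖θ‖²` is convex. -/
theorem marginal_loglik_strongly_convex {dθ dx : ℕ} (μ : ℝ) (hμ : 0 < μ)
    (U : EuclideanSpace ℝ (Fin dθ) → EuclideanSpace ℝ (Fin dx) → ℝ)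
    (hUmeas : Measurable (Function.uncurry U))
    (hUconv : ConvexOn ℝ Set.univ
      (fun p : EuclideanSpace ℝ (Fin dθ) × EuclideanSpace ℝ (Fin dx) =>
        U p.1 p.2 - μ / 2 * (‖p.1‖ ^ 2 + ‖p.2‖ ^ 2)))
    (hint : ∀ θ, Integrable (fun x => Real.exp (-U θ x)))
    (hpos : ∀ θ, 0 < ∫ x, Real.exp (-U θ x)) :
    ConvexOn ℝ Set.univ
      (fun θ : EuclideanSpace ℝ (Fin dθ) =>
        (-Real.log (∫ x, Real.exp (-U θ x))) - μ / 2 * ‖θ‖ ^ 2) := by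
  set c : ℝ := μ / 2 with hc
  have hc0 : 0 < c := by positivity
  set p : EuclideanSpace ℝ (Fin dθ) → ℝ := fun θ => ∫ x, Real.exp (-U θ x) with hp
  have hUm : ∀ θ, Measurable fun x => U θ x := fun θ =>
    hUmeas.comp (measurable_const.prodMk measurable_id)
  -- the lintegral of the tilted integrand
  have hlint : ∀ (θ : EuclideanSpace ℝ (Fin dθ)) (K : ℝ),
      (∫⁻ x, ENNReal.ofReal (Real.exp (K - U θ x))) = ENNReal.ofReal (Real.exp K * p θ) := by
    intro θ K
    have hi : Integrable (fun x => Real.exp K * Real.exp (-U θ x)) := (hint θ).const_mul _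
    calc (∫⁻ x, ENNReal.ofReal (Real.exp (K - U θ x)))
        = ∫⁻ x, ENNReal.ofReal (Real.exp K * Real.exp (-U θ x)) := by
          congr 1; funext x; rw [← Real.exp_add]; ring_nf
      _ = ENNReal.ofReal (∫ x, Real.exp K * Real.exp (-U θ x)) :=
          (ofReal_integral_eq_lintegral_ofReal hi
            (ae_of_all _ fun x => by positivity)).symm
      _ = ENNReal.ofReal (Real.exp K * p θ) := by rw [integral_const_mul]
  constructor
  · exact convex_univ
  intro θ₁ _ θ₂ _ a b ha hb hab
  rcases ha.eq_or_lt with rfl | ha0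
  · have hb1 : b = 1 := by linarith
    subst hb1
    simp
  rcases hb.eq_or_lt with rfl | hb0
  · have ha1 : a = 1 := by linarith
    subst ha1
    simp
  -- main case
  set θ₀ := a • θ₁ + b • θ₂ with hθ₀
  have h1ab : 1 - b = a := by linarith
  -- functions for PL
  set f : EuclideanSpace ℝ (Fin dx) → ENNReal :=
    fun x => ENNReal.ofReal (Real.exp (c * ‖θ₁‖ ^ 2 - U θ₁ x)) with hf
  set g : EuclideanSpace ℝ (Fin dx) → ENNReal :=
    fun x => ENNReal.ofReal (Real.exp (c * ‖θ₂‖ ^ 2 - U θ₂ x)) with hg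
  set h : EuclideanSpace ℝ (Fin dx) → ENNReal :=
    fun x => ENNReal.ofReal (Real.exp (c * ‖θ₀‖ ^ 2 - U θ₀ x)) with hh
  have hfm : Measurable f := ((measurable_const.sub (hUm θ₁)).exp).ennreal_ofReal
  have hgm : Measurable g := ((measurable_const.sub (hUm θ₂)).exp).ennreal_ofReal
  have hhm : Measurable h := ((measurable_const.sub (hUm θ₀)).exp).ennreal_ofReal
  have hyp : ∀ x y : EuclideanSpace ℝ (Fin dx),
      f x ^ (1 - b) * g y ^ b ≤ h ((1 - b) • x + b • y) := by
    intro x y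
    rw [h1ab]
    set z := a • x + b • y with hz
    -- norm squared convexity
    have hnz : ‖z‖ ^ 2 ≤ a * ‖x‖ ^ 2 + b * ‖y‖ ^ 2 := by
      have h1 : ‖z‖ ≤ a * ‖x‖ + b * ‖y‖ := by
        refine (norm_add_le _ _).trans ?_
        rw [norm_smul, norm_smul, Real.norm_eq_abs, Real.norm_eq_abs,
          abs_of_pos ha0, abs_of_pos hb0]
      have h2 : ‖z‖ ^ 2 ≤ (a * ‖x‖ + b * ‖y‖) ^ 2 := pow_le_pow_left₀ (norm_nonneg _) h1 2
      nlinarith [mul_nonneg (mul_nonneg ha hb) (sq_nonneg (‖x‖ - ‖y‖))]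
    -- joint convexity
    have hcv := hUconv.2 (Set.mem_univ (θ₁, x)) (Set.mem_univ (θ₂, y)) ha hb hab
    have hcomb : a • ((θ₁, x) : EuclideanSpace ℝ (Fin dθ) × EuclideanSpace ℝ (Fin dx))
        + b • (θ₂, y) = (θ₀, z) := rfl
    rw [hcomb] at hcv
    simp only [smul_eq_mul] at hcv
    have hkey : a * (c * ‖θ₁‖ ^ 2 - U θ₁ x) + b * (c * ‖θ₂‖ ^ 2 - U θ₂ y)
        ≤ c * ‖θ₀‖ ^ 2 - U θ₀ z := by
      have hmul : 0 ≤ c * (a * ‖x‖ ^ 2 + b * ‖y‖ ^ 2 - ‖z‖ ^ 2) :=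
        mul_nonneg hc0.le (by linarith)
      nlinarith [hcv]
    calc f x ^ a * g y ^ b
        = ENNReal.ofReal (Real.exp (a * (c * ‖θ₁‖ ^ 2 - U θ₁ x))
            * Real.exp (b * (c * ‖θ₂‖ ^ 2 - U θ₂ y))) := by
          rw [hf, hg, ENNReal.ofReal_rpow_of_pos (Real.exp_pos _),
            ENNReal.ofReal_rpow_of_pos (Real.exp_pos _), ← ENNReal.ofReal_mul (by positivity),
            ← Real.exp_mul, ← Real.exp_mul, mul_comm _ a, mul_comm _ b]
      _ ≤ h z := by
          rw [hh, ← Real.exp_add]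
          exact ENNReal.ofReal_le_ofReal (Real.exp_le_exp.mpr hkey)
  have hPL := euclidean_PL hfm hgm hhm hb0 (by linarith) hyp
  rw [hf, hg, hh, hlint θ₁ _, hlint θ₂ _, hlint θ₀ _, h1ab] at hPL
  -- convert to a real inequality
  set P₁ : ℝ := Real.exp (c * ‖θ₁‖ ^ 2) * p θ₁ with hP₁
  set P₂ : ℝ := Real.exp (c * ‖θ₂‖ ^ 2) * p θ₂ with hP₂
  set P₀ : ℝ := Real.exp (c * ‖θ₀‖ ^ 2) * p θ₀ with hP₀
  have hP₁0 : 0 < P₁ := mul_pos (Real.exp_pos _) (hpos θ₁)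
  have hP₂0 : 0 < P₂ := mul_pos (Real.exp_pos _) (hpos θ₂)
  have hP₀0 : 0 < P₀ := mul_pos (Real.exp_pos _) (hpos θ₀)
  have hreal : P₁ ^ a * P₂ ^ b ≤ P₀ := by
    rw [ENNReal.ofReal_rpow_of_pos hP₁0, ENNReal.ofReal_rpow_of_pos hP₂0,
      ← ENNReal.ofReal_mul (by positivity), ENNReal.ofReal_le_ofReal_iff hP₀0.le] at hPL
    exact hPL
  have hlog := Real.log_le_log (mul_pos (Real.rpow_pos_of_pos hP₁0 a)
    (Real.rpow_pos_of_pos hP₂0 b)) hreal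
  rw [Real.log_mul (Real.rpow_pos_of_pos hP₁0 a).ne' (Real.rpow_pos_of_pos hP₂0 b).ne',
    Real.log_rpow hP₁0, Real.log_rpow hP₂0] at hlog
  rw [hP₀, hP₁, hP₂, Real.log_mul (Real.exp_pos _).ne' (hpos θ₀).ne',
    Real.log_mul (Real.exp_pos _).ne' (hpos θ₁).ne',
    Real.log_mul (Real.exp_pos _).ne' (hpos θ₂).ne', Real.log_exp, Real.log_exp,
    Real.log_exp] at hlog
  simp only [smul_eq_mul]
  linarith [hlog]
end

section
/- Let U : ℝ^{d_θ} × ℝ^{d_x} → ℝ be measurable with 0 < p_θ(y) := ∫_{ℝ^{d_x}} e^{−U(θ,x)} dx < ∞ for every θ, let N ∈ ℕ, and suppose Z := ∫_{ℝ^{d_θ}} p_θ(y)^N dθ ∈ (0,∞). Let π̄^N be the probability measure on ℝ^{d_θ} × (ℝ^{d_x})^N with density proportional to (θ, z_1,…,z_N) ↦ exp(−Σ_{i=1}^N U(θ, √N z_i)). Then the pushforward of π̄^N under the projection (θ, z_1,…,z_N) ↦ θ is the probability measure on ℝ^{d_θ} with density θ ↦ p_θ(y)^N / Z; that is, the θ-marginal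 of π̄^N has density proportional to exp(−N κ(θ)) where κ(θ) = −log p_θ(y). -/
open MeasureTheory Real
open scoped ENNReal

private lemma lintegral_pi_pow {E : Type*} [MeasureSpace E] [SigmaFinite (volume : Measure E)]
    (n : ℕ) (f : E → ℝ≥0∞) (hf : Measurable f) :
    ∫⁻ x : Fin n → E, ∏ i, f (x i) = (∫⁻ x, f x) ^ n := by
  induction n with
  | zero => simp [volume_pi, lintegral_const]
  | succ n ih =>
    have mp := (measurePreserving_piFinSuccAbove
      (fun _ : Fin (n + 1) => (volume : Measure E)) 0).symm
    rw [volume_pi, ← mp.lintegral_comp_emb (MeasurableEquiv.measurableEmbedding _)]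
    simp_rw [MeasurableEquiv.piFinSuccAbove_symm_apply, Fin.insertNthEquiv,
      Equiv.coe_fn_mk, Fin.insertNth_zero, Fin.prod_univ_succ, Fin.cons_zero, Fin.cons_succ,
]
    simp only [Fin.zero_succAbove, cast_eq]
    rw [lintegral_prod_mul (f := f) (g := fun z : Fin n → E => ∏ j, f (z j)) hf.aemeasurable
      ((Finset.measurable_prod Finset.univ
        fun j _ => hf.comp (measurable_pi_apply j)).aemeasurable)]
    rw [← volume_pi, ih, pow_succ]
    ring

private lemma map_fst_withDensity {α β : Type*} [MeasurableSpace α] [MeasurableSpace β]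
    (μ : Measure α) (ν : Measure β) [SigmaFinite μ] [SigmaFinite ν]
    (f : α × β → ℝ≥0∞) (hf : Measurable f) :
    ((μ.prod ν).withDensity f).map Prod.fst
      = μ.withDensity fun a => ∫⁻ b, f (a, b) ∂ν := by
  ext s hs
  rw [Measure.map_apply measurable_fst hs,
    withDensity_apply _ (measurable_fst hs), withDensity_apply _ hs]
  have hpre : Prod.fst ⁻¹' s = s ×ˢ (Set.univ : Set β) := by
    ext w; simp
  rw [hpre, ← Measure.restrict_prod_eq_prod_univ,
    lintegral_prod _ hf.aemeasurable]

/-- **θ-marginal of the stationary measure of KIPLD (Proposition 4.1).**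
Let `π̄^N` be the probability measure on `ℝ^{dθ} × (ℝ^{dx})^N` with density proportional to
`exp (-∑ᵢ U(θ, √N zᵢ))`.  Then its pushforward under the projection onto `θ` is the probability
measure with density `θ ↦ p_θ(y)^N / Z`, where `p_θ(y) = ∫ exp (-U θ x) dx` and
`Z = ∫ p_θ(y)^N dθ`; i.e. the θ-marginal has density proportional to `exp (-N κ θ)` with
`κ θ = -log p_θ(y)`. -/
theorem kipld_theta_marginal {dθ dx : ℕ} (N : ℕ)
    (U : EuclideanSpace ℝ (Fin dθ) → EuclideanSpace ℝ (Fin dx) → ℝ)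
    (hUmeas : Measurable (Function.uncurry U))
    (hint : ∀ θ, Integrable (fun x => Real.exp (-U θ x)))
    (hpos : ∀ θ, 0 < ∫ x, Real.exp (-U θ x))
    (hZint : Integrable (fun θ => (∫ x, Real.exp (-U θ x)) ^ N))
    (hZpos : 0 < ∫ θ, (∫ x, Real.exp (-U θ x)) ^ N) :
    Measure.map Prod.fst
      ((ENNReal.ofReal
          (∫ w : EuclideanSpace ℝ (Fin dθ) × (Fin N → EuclideanSpace ℝ (Fin dx)),
            Real.exp (-(∑ i, U w.1 (Real.sqrt N • w.2 i)))))⁻¹ •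
        volume.withDensity fun w : EuclideanSpace ℝ (Fin dθ) × (Fin N → EuclideanSpace ℝ (Fin dx)) =>
          ENNReal.ofReal (Real.exp (-(∑ i, U w.1 (Real.sqrt N • w.2 i)))))
    = (ENNReal.ofReal (∫ θ, (∫ x, Real.exp (-U θ x)) ^ N))⁻¹ •
        volume.withDensity fun θ : EuclideanSpace ℝ (Fin dθ) =>
          ENNReal.ofReal ((∫ x, Real.exp (-U θ x)) ^ N) := by
  classical
  set r : ℝ := Real.sqrt N with hrdef
  set κ : ℝ≥0∞ := (ENNReal.ofReal (r ^ dx))⁻¹ with hκdef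
  -- measurability facts
  have hsummeas : Measurable fun w : EuclideanSpace ℝ (Fin dθ) × (Fin N → EuclideanSpace ℝ (Fin dx)) =>
      (∑ i, U w.1 (r • w.2 i)) := by
    refine Finset.measurable_sum _ fun i _ => ?_
    have h2 : Measurable fun w : EuclideanSpace ℝ (Fin dθ) × (Fin N → EuclideanSpace ℝ (Fin dx)) =>
        r • w.2 i := by
      exact Measurable.const_smul ((measurable_pi_apply i).comp measurable_snd) r
    exact hUmeas.comp (measurable_fst.prodMk h2)
  have hFmeas : Measurable fun w : EuclideanSpace ℝ (Fin dθ) × (Fin N → EuclideanSpace ℝ (Fin dx)) =>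
      ENNReal.ofReal (Real.exp (-(∑ i, U w.1 (r • w.2 i)))) :=
    ENNReal.measurable_ofReal.comp (Real.measurable_exp.comp hsummeas.neg)
  have hgmeas : ∀ θ : EuclideanSpace ℝ (Fin dθ),
      Measurable fun x : EuclideanSpace ℝ (Fin dx) => ENNReal.ofReal (Real.exp (-U θ x)) := by
    intro θ
    have hUθ : Measurable (U θ) := hUmeas.of_uncurry_left
    exact ENNReal.measurable_ofReal.comp (Real.measurable_exp.comp hUθ.neg)
  -- basic facts about κ
  have hκ0 : κ ^ N ≠ 0 := pow_ne_zero _ (ENNReal.inv_ne_zero.2 ENNReal.ofReal_ne_top)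
  have hκtop : κ ^ N ≠ ⊤ := by
    rcases Nat.eq_zero_or_pos N with h | h
    · subst h; simp
    · have hr0 : (0 : ℝ) < r := Real.sqrt_pos.2 (by exact_mod_cast h)
      have h1 : ENNReal.ofReal (r ^ dx) ≠ 0 :=
        (ENNReal.ofReal_pos.2 (pow_pos hr0 dx)).ne'
      exact ENNReal.pow_ne_top (ENNReal.inv_ne_top.2 h1)
  -- single-factor computation
  have hfactor : ∀ θ : EuclideanSpace ℝ (Fin dθ), 0 < N →
      ∫⁻ x : EuclideanSpace ℝ (Fin dx), ENNReal.ofReal (Real.exp (-U θ (r • x)))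
        = κ * ENNReal.ofReal (∫ x, Real.exp (-U θ x)) := by
    intro θ hN
    have hr0 : (0 : ℝ) < r := Real.sqrt_pos.2 (by exact_mod_cast hN)
    have hmap : Measure.map (r • ·) (volume : Measure (EuclideanSpace ℝ (Fin dx)))
        = ENNReal.ofReal |(r ^ Module.finrank ℝ (EuclideanSpace ℝ (Fin dx)))⁻¹| • volume :=
      Measure.map_addHaar_smul volume hr0.ne'
    have h1 : ∫⁻ x : EuclideanSpace ℝ (Fin dx), ENNReal.ofReal (Real.exp (-U θ (r • x)))
        = ∫⁻ y, ENNReal.ofReal (Real.exp (-U θ y))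
            ∂(Measure.map (r • ·) (volume : Measure (EuclideanSpace ℝ (Fin dx)))) :=
      (lintegral_map (hgmeas θ) (measurable_const_smul r)).symm
    rw [h1, hmap, lintegral_smul_measure]
    have hfr : Module.finrank ℝ (EuclideanSpace ℝ (Fin dx)) = dx :=
      finrank_euclideanSpace_fin
    rw [hfr, abs_of_pos (inv_pos.2 (pow_pos hr0 dx)),
      ENNReal.ofReal_inv_of_pos (pow_pos hr0 dx),
      ofReal_integral_eq_lintegral_ofReal (hint θ)
        (Filter.Eventually.of_forall fun x => (Real.exp_pos _).le), smul_eq_mul]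
  -- the θ-marginal density
  have hG : ∀ θ : EuclideanSpace ℝ (Fin dθ),
      (∫⁻ z : Fin N → EuclideanSpace ℝ (Fin dx),
          ENNReal.ofReal (Real.exp (-(∑ i, U θ (r • z i)))))
        = κ ^ N * ENNReal.ofReal ((∫ x, Real.exp (-U θ x)) ^ N) := by
    intro θ
    have hsplit : ∀ z : Fin N → EuclideanSpace ℝ (Fin dx),
        ENNReal.ofReal (Real.exp (-(∑ i, U θ (r • z i))))
          = ∏ i, ENNReal.ofReal (Real.exp (-U θ (r • z i))) := by
      intro z
      rw [← ENNReal.ofReal_prod_of_nonneg (fun i _ => (Real.exp_pos _).le), ← Real.exp_sum]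
      congr 1
      rw [← Finset.sum_neg_distrib]
    simp_rw [hsplit]
    rw [lintegral_pi_pow N (fun x => ENNReal.ofReal (Real.exp (-U θ (r • x))))
      ((hgmeas θ).comp (measurable_const_smul r))]
    rcases Nat.eq_zero_or_pos N with h | h
    · subst h; simp
    · rw [hfactor θ h, mul_pow, ← ENNReal.ofReal_pow (hpos θ).le]
  -- Tonelli for the normalising constant
  have hTon : (∫⁻ w : EuclideanSpace ℝ (Fin dθ) × (Fin N → EuclideanSpace ℝ (Fin dx)),
        ENNReal.ofReal (Real.exp (-(∑ i, U w.1 (r • w.2 i)))))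
      = κ ^ N * ENNReal.ofReal (∫ θ, (∫ x, Real.exp (-U θ x)) ^ N) := by
    rw [Measure.volume_eq_prod, lintegral_prod _ hFmeas.aemeasurable]
    simp_rw [hG]
    rw [lintegral_const_mul' _ _ hκtop,
      ← ofReal_integral_eq_lintegral_ofReal hZint
        (Filter.Eventually.of_forall fun θ => pow_nonneg (hpos θ).le N)]
  -- integrability of the joint density
  have hFint : Integrable
      (fun w : EuclideanSpace ℝ (Fin dθ) × (Fin N → EuclideanSpace ℝ (Fin dx)) =>
        Real.exp (-(∑ i, U w.1 (r • w.2 i)))) := by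
    refine ⟨(Real.measurable_exp.comp hsummeas.neg).aestronglyMeasurable, ?_⟩
    rw [hasFiniteIntegral_iff_ofReal
      (Filter.Eventually.of_forall fun w => (Real.exp_pos _).le), hTon]
    exact ENNReal.mul_lt_top hκtop.lt_top ENNReal.ofReal_lt_top
  have hT : ENNReal.ofReal
      (∫ w : EuclideanSpace ℝ (Fin dθ) × (Fin N → EuclideanSpace ℝ (Fin dx)),
        Real.exp (-(∑ i, U w.1 (r • w.2 i))))
      = κ ^ N * ENNReal.ofReal (∫ θ, (∫ x, Real.exp (-U θ x)) ^ N) := by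
    rw [ofReal_integral_eq_lintegral_ofReal hFint
      (Filter.Eventually.of_forall fun w => (Real.exp_pos _).le), hTon]
  -- assemble
  have hW0 : ENNReal.ofReal (∫ θ, (∫ x, Real.exp (-U θ x)) ^ N) ≠ 0 :=
    (ENNReal.ofReal_pos.2 hZpos).ne'
  rw [Measure.map_smul, hT, Measure.volume_eq_prod, map_fst_withDensity _ _ _ hFmeas]
  have hdens : (fun a : EuclideanSpace ℝ (Fin dθ) =>
      ∫⁻ b : Fin N → EuclideanSpace ℝ (Fin dx),
        ENNReal.ofReal (Real.exp (-(∑ i, U (a, b).1 (r • (a, b).2 i)))))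
      = (κ ^ N) • (fun θ : EuclideanSpace ℝ (Fin dθ) =>
          ENNReal.ofReal ((∫ x, Real.exp (-U θ x)) ^ N)) := by
    funext θ
    simpa using hG θ
  rw [hdens, withDensity_smul' _ _ hκtop, smul_smul]
  congr 1
  rw [ENNReal.mul_inv (Or.inl hκ0) (Or.inl hκtop), mul_right_comm,
    ENNReal.inv_mul_cancel hκ0 hκtop, one_mul]
end

section
/- Let U : ℝ^{d_θ} × ℝ^{d_x} → ℝ be differentiable with L-Lipschitz gradient: ‖∇U(z) − ∇U(z')‖ ≤ L‖z − z'‖ for all z, z' ∈ ℝ^{d_θ+d_x}, where L > 0. For N ∈ ℕ define barU_N : ℝ^{d_θ} × (ℝ^{d_x})^N → ℝ by barU_N(θ, z_1,…,z_N) = (1/N) Σ_{i=1}^N U(θ, √N z_i). Then barU_N has L-Lipschitz gradient with the same constant independent of N: ‖∇barU_N(w) − ∇barU_N(w')‖ ≤ L‖w − w'‖ for all w, w' ∈ ℝ^{d_θ + N d_x}. -/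
open MeasureTheory Real

/-- `ℝ^{dθ} × ℝ^{dx}` with the Euclidean (`L²`) norm. -/
abbrev JointSpace (dθ dx : ℕ) :=
  WithLp 2 (EuclideanSpace ℝ (Fin dθ) × EuclideanSpace ℝ (Fin dx))

/-- `ℝ^{dθ} × (ℝ^{dx})^N` with the Euclidean (`L²`) norm. -/
abbrev ConfSpace (dθ dx N : ℕ) :=
  WithLp 2 (EuclideanSpace ℝ (Fin dθ) × PiLp 2 (fun _ : Fin N => EuclideanSpace ℝ (Fin dx)))

/-- The rescaled joint potential `barU_N (θ, z₁,…,z_N) = (1/N) ∑ᵢ U (θ, √N zᵢ)`. -/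
noncomputable def barUN {dθ dx : ℕ} (N : ℕ) (U : JointSpace dθ dx → ℝ)
    (w : ConfSpace dθ dx N) : ℝ :=
  (N : ℝ)⁻¹ * ∑ i : Fin N, U (WithLp.toLp 2 ((WithLp.ofLp w).1, Real.sqrt N • (WithLp.ofLp w).2 i))

noncomputable def Tmap (dθ dx N : ℕ) (i : Fin N) :
    ConfSpace dθ dx N →L[ℝ] JointSpace dθ dx :=
  ((WithLp.prodContinuousLinearEquiv 2 ℝ (EuclideanSpace ℝ (Fin dθ))
      (EuclideanSpace ℝ (Fin dx))).symm :
      EuclideanSpace ℝ (Fin dθ) × EuclideanSpace ℝ (Fin dx) →L[ℝ] JointSpace dθ dx).comp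
    (((ContinuousLinearMap.fst ℝ (EuclideanSpace ℝ (Fin dθ))
        (PiLp 2 (fun _ : Fin N => EuclideanSpace ℝ (Fin dx)))).prod
      ((Real.sqrt N • PiLp.proj 2 (fun _ : Fin N => EuclideanSpace ℝ (Fin dx)) i).comp
        (ContinuousLinearMap.snd ℝ (EuclideanSpace ℝ (Fin dθ))
          (PiLp 2 (fun _ : Fin N => EuclideanSpace ℝ (Fin dx)))))).comp
      ((WithLp.prodContinuousLinearEquiv 2 ℝ (EuclideanSpace ℝ (Fin dθ))
        (PiLp 2 (fun _ : Fin N => EuclideanSpace ℝ (Fin dx)))) :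
        ConfSpace dθ dx N →L[ℝ] _))

lemma Tmap_apply {dθ dx N : ℕ} (i : Fin N) (w : ConfSpace dθ dx N) :
    Tmap dθ dx N i w = WithLp.toLp 2 ((WithLp.ofLp w).1, Real.sqrt N • (WithLp.ofLp w).2 i) := rfl

lemma Tmap_norm_sq {dθ dx N : ℕ} (i : Fin N) (v : ConfSpace dθ dx N) :
    ‖Tmap dθ dx N i v‖ ^ 2 = ‖v.fst‖ ^ 2 + (N : ℝ) * ‖v.snd i‖ ^ 2 := by
  rw [WithLp.prod_norm_sq_eq_of_L2]
  have h1 : (Tmap dθ dx N i v).fst = v.fst := rfl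
  have h2 : (Tmap dθ dx N i v).snd = Real.sqrt N • v.snd i := rfl
  rw [h1, h2, norm_smul, mul_pow, Real.norm_eq_abs, abs_of_nonneg (Real.sqrt_nonneg _),
    Real.sq_sqrt (Nat.cast_nonneg N)]

lemma sum_Tmap_norm_sq {dθ dx N : ℕ} (v : ConfSpace dθ dx N) :
    ∑ i : Fin N, ‖Tmap dθ dx N i v‖ ^ 2 = (N : ℝ) * ‖v‖ ^ 2 := by
  simp only [Tmap_norm_sq]
  rw [Finset.sum_add_distrib, Finset.sum_const, Finset.card_univ, Fintype.card_fin,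
    nsmul_eq_mul, ← Finset.mul_sum, WithLp.prod_norm_sq_eq_of_L2,
    PiLp.norm_sq_eq_of_L2 (fun _ : Fin N => EuclideanSpace ℝ (Fin dx)) v.snd]
  ring

lemma barUN_hasFDerivAt {dθ dx N : ℕ} (U : JointSpace dθ dx → ℝ)
    (hU : Differentiable ℝ U) (w : ConfSpace dθ dx N) :
    HasFDerivAt (barUN N U)
      ((N : ℝ)⁻¹ • ∑ i : Fin N, (fderiv ℝ U (Tmap dθ dx N i w)).comp (Tmap dθ dx N i)) w := by
  have : barUN N U = fun w => (N : ℝ)⁻¹ * ∑ i : Fin N, U (Tmap dθ dx N i w) := rfl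
  rw [this]
  exact (HasFDerivAt.fun_sum (fun i _ =>
    ((hU (Tmap dθ dx N i w)).hasFDerivAt.comp w (Tmap dθ dx N i).hasFDerivAt))).const_mul _

set_option maxHeartbeats 1000000 in
set_option synthInstance.maxHeartbeats 200000 in
/-- **Gradient Lipschitzness of `barU_N` (Lemma A.5).**  If `U` is differentiable with
`L`-Lipschitz gradient on `ℝ^{dθ+dx}`, then `barU_N` has `L`-Lipschitz gradient on
`ℝ^{dθ + N dx}`, with the same constant, independently of `N`. -/
theorem barUN_gradient_lipschitz {dθ dx : ℕ} (L : ℝ) (hL : 0 < L) (N : ℕ)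
    (U : JointSpace dθ dx → ℝ) (hU : Differentiable ℝ U)
    (hlip : ∀ z z' : JointSpace dθ dx,
      ‖gradient U z - gradient U z'‖ ≤ L * ‖z - z'‖) :
    ∀ w w' : ConfSpace dθ dx N,
      ‖gradient (barUN N U) w - gradient (barUN N U) w'‖ ≤ L * ‖w - w'‖ := by
  intro w w'
  -- pass from gradients to Fréchet derivatives
  have hgrad : ∀ (F : Type) [NormedAddCommGroup F] [InnerProductSpace ℝ F]
      [CompleteSpace F] (f : F → ℝ) (x y : F),
      ‖gradient f x - gradient f y‖ = ‖fderiv ℝ f x - fderiv ℝ f y‖ := by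
    intro F _ _ _ f x y
    rw [gradient, gradient, ← map_sub, LinearIsometryEquiv.norm_map]
  have hlip' : ∀ z z' : JointSpace dθ dx,
      ‖fderiv ℝ U z - fderiv ℝ U z'‖ ≤ L * ‖z - z'‖ := by
    intro z z'; rw [← hgrad]; exact hlip z z'
  rw [hgrad]
  haveI : ContinuousSMul ℝ (ConfSpace dθ dx N) := IsBoundedSMul.continuousSMul
  rw [(barUN_hasFDerivAt U hU w).fderiv, (barUN_hasFDerivAt U hU w').fderiv]
  set B : Fin N → (JointSpace dθ dx →L[ℝ] ℝ) := fun i =>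
    fderiv ℝ U (Tmap dθ dx N i w) - fderiv ℝ U (Tmap dθ dx N i w') with hB
  have hdiff : ((N : ℝ)⁻¹ • ∑ i : Fin N, (fderiv ℝ U (Tmap dθ dx N i w)).comp (Tmap dθ dx N i))
      - ((N : ℝ)⁻¹ • ∑ i : Fin N, (fderiv ℝ U (Tmap dθ dx N i w')).comp (Tmap dθ dx N i))
      = (N : ℝ)⁻¹ • ∑ i : Fin N, (B i).comp (Tmap dθ dx N i) := by
    rw [← smul_sub, ← Finset.sum_sub_distrib]
    simp only [hB, ContinuousLinearMap.sub_comp]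
  rw [hdiff]
  -- bound the sum of squares of the ‖B i‖
  have hBsq : ∑ i : Fin N, ‖B i‖ ^ 2 ≤ L ^ 2 * ((N : ℝ) * ‖w - w'‖ ^ 2) := by
    rw [← sum_Tmap_norm_sq (w - w'), Finset.mul_sum]
    refine Finset.sum_le_sum fun i _ => ?_
    have h1 : ‖B i‖ ≤ L * ‖Tmap dθ dx N i (w - w')‖ := by
      rw [map_sub]; exact hlip' _ _
    calc ‖B i‖ ^ 2 ≤ (L * ‖Tmap dθ dx N i (w - w')‖) ^ 2 := by
          exact pow_le_pow_left₀ (norm_nonneg _) h1 2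
      _ = L ^ 2 * ‖Tmap dθ dx N i (w - w')‖ ^ 2 := by ring
  refine ContinuousLinearMap.opNorm_le_bound _
    (mul_nonneg hL.le (norm_nonneg _)) fun v => ?_
  have hv : ∀ i : Fin N, ‖(B i).comp (Tmap dθ dx N i) v‖ ≤ ‖B i‖ * ‖Tmap dθ dx N i v‖ := by
    intro i
    exact (B i).le_opNorm _
  -- Cauchy-Schwarz
  have hCS : (∑ i : Fin N, ‖B i‖ * ‖Tmap dθ dx N i v‖) ^ 2
      ≤ (∑ i : Fin N, ‖B i‖ ^ 2) * ∑ i : Fin N, ‖Tmap dθ dx N i v‖ ^ 2 :=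
    Finset.sum_mul_sq_le_sq_mul_sq _ _ _
  have hsum : ∑ i : Fin N, ‖B i‖ * ‖Tmap dθ dx N i v‖ ≤ L * (N : ℝ) * ‖w - w'‖ * ‖v‖ := by
    have hrhs : 0 ≤ L * (N : ℝ) * ‖w - w'‖ * ‖v‖ := by positivity
    have hsq : (∑ i : Fin N, ‖B i‖ * ‖Tmap dθ dx N i v‖) ^ 2
        ≤ (L * (N : ℝ) * ‖w - w'‖ * ‖v‖) ^ 2 := by
      calc (∑ i : Fin N, ‖B i‖ * ‖Tmap dθ dx N i v‖) ^ 2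
          ≤ (∑ i : Fin N, ‖B i‖ ^ 2) * ∑ i : Fin N, ‖Tmap dθ dx N i v‖ ^ 2 := hCS
        _ ≤ (L ^ 2 * ((N : ℝ) * ‖w - w'‖ ^ 2)) * ((N : ℝ) * ‖v‖ ^ 2) := by
            rw [sum_Tmap_norm_sq]
            refine mul_le_mul_of_nonneg_right hBsq ?_
            positivity
        _ = (L * (N : ℝ) * ‖w - w'‖ * ‖v‖) ^ 2 := by ring
    have h0 : 0 ≤ ∑ i : Fin N, ‖B i‖ * ‖Tmap dθ dx N i v‖ :=
      Finset.sum_nonneg fun i _ => mul_nonneg (norm_nonneg _) (norm_nonneg _)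
    nlinarith
  have heval : ((N : ℝ)⁻¹ • ∑ i : Fin N, (B i).comp (Tmap dθ dx N i)) v
      = (N : ℝ)⁻¹ * ∑ i : Fin N, (B i).comp (Tmap dθ dx N i) v := by
    rw [ContinuousLinearMap.smul_apply, ContinuousLinearMap.sum_apply, smul_eq_mul]
  rw [heval]
  rw [norm_mul, Real.norm_eq_abs, abs_of_nonneg (by positivity : (0:ℝ) ≤ (N:ℝ)⁻¹)]
  calc (N : ℝ)⁻¹ * ‖∑ i : Fin N, (B i).comp (Tmap dθ dx N i) v‖
      ≤ (N : ℝ)⁻¹ * ∑ i : Fin N, ‖B i‖ * ‖Tmap dθ dx N i v‖ := by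
        refine mul_le_mul_of_nonneg_left ?_ (by positivity)
        exact (norm_sum_le _ _).trans (Finset.sum_le_sum fun i _ => hv i)
    _ ≤ (N : ℝ)⁻¹ * (L * (N : ℝ) * ‖w - w'‖ * ‖v‖) :=
        mul_le_mul_of_nonneg_left hsum (by positivity)
    _ ≤ L * ‖w - w'‖ * ‖v‖ := by
        rcases Nat.eq_zero_or_pos N with h | h
        · simp only [h, Nat.cast_zero, mul_zero, zero_mul, inv_zero]
          positivity
        · have : (N : ℝ) ≠ 0 := Nat.cast_ne_zero.mpr h.ne'
          rw [show (N : ℝ)⁻¹ * (L * (N : ℝ) * ‖w - w'‖ * ‖v‖)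
            = ((N : ℝ)⁻¹ * (N : ℝ)) * (L * ‖w - w'‖ * ‖v‖) by ring, inv_mul_cancel₀ this,
            one_mul]
end
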